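/- Let n be a positive integer, let C ⊆ 2^[n] be an inclusion-wise maximal symmetric chord separated collection, and let A ⊆ [n] be chord separated from every member of C and chord separated from A*. Then A ∈ C and A* ∈ C. -/
import Mathlib


open Finset

/-- The K-involution on subsets of `[n] = {1,…,n}`:
`A* = {i ∈ [n] : n+1−i ∉ A}`. -/
def KInv (n : ℕ) (A : Finset ℕ) : Finset ℕ :=
  (Finset.Icc 1 n).filter (fun i => n + 1 - i ∉ A)

/-- `A` surrounds `B` (requires `B − A ≠ ∅`):
`min(A−B) < min(B−A)` and `max(A−B) > max(B−A)`,
with the conventions `min ∅ = ⊤` and `max ∅ = ⊥`. -/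
def Surrounds (A B : Finset ℕ) : Prop :=
  (B \ A).Nonempty ∧ (A \ B).min < (B \ A).min ∧ (B \ A).max < (A \ B).max

/-- `A` and `B` are chord separated: there are no `i<j<k<l` with `i,k` in one
of `A−B`, `B−A` and `j,l` in the other. -/
def ChordSep (A B : Finset ℕ) : Prop :=
  ¬ ∃ i j k l : ℕ, i < j ∧ j < k ∧ k < l ∧
    ((i ∈ A \ B ∧ k ∈ A \ B ∧ j ∈ B \ A ∧ l ∈ B \ A) ∨
     (i ∈ B \ A ∧ k ∈ B \ A ∧ j ∈ A \ B ∧ l ∈ A \ B))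

/-- `A` and `B` are strongly separated: there are no `i<j<k` with `i,k` in one
of `A−B`, `B−A` and `j` in the other. -/
def StrongSep (A B : Finset ℕ) : Prop :=
  ¬ ∃ i j k : ℕ, i < j ∧ j < k ∧
    ((i ∈ A \ B ∧ k ∈ A \ B ∧ j ∈ B \ A) ∨
     (i ∈ B \ A ∧ k ∈ B \ A ∧ j ∈ A \ B))

/-- `A` and `B` are weakly separated: chord separated, `|A| ≤ |B|` whenever
`A` surrounds `B`, and `|B| ≤ |A|` whenever `B` surrounds `A`. -/
def WeakSep (A B : Finset ℕ) : Prop :=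
  ChordSep A B ∧ (Surrounds A B → A.card ≤ B.card) ∧
    (Surrounds B A → B.card ≤ A.card)

/-- A symmetric chord separated collection in `2^[n]`. -/
def SymmCColl (n : ℕ) (S : Finset (Finset ℕ)) : Prop :=
  (∀ A ∈ S, A ⊆ Finset.Icc 1 n) ∧ (∀ A ∈ S, KInv n A ∈ S) ∧
    ∀ A ∈ S, ∀ B ∈ S, ChordSep A B

lemma chordSep_refl (A : Finset ℕ) : ChordSep A A := by
  simp [ChordSep]

lemma chordSep_symm {A B : Finset ℕ} (h : ChordSep A B) : ChordSep B A := by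
  rintro ⟨i, j, k, l, h1, h2, h3, hor⟩
  exact h ⟨i, j, k, l, h1, h2, h3, hor.symm⟩

lemma kinv_subset (n : ℕ) (A : Finset ℕ) : KInv n A ⊆ Finset.Icc 1 n :=
  Finset.filter_subset _ _

lemma mem_kinv_sdiff {n m : ℕ} {A B : Finset ℕ} :
    m ∈ KInv n A \ KInv n B ↔ m ∈ Finset.Icc 1 n ∧ (n + 1 - m) ∈ B \ A := by
  simp only [KInv, Finset.mem_sdiff, Finset.mem_filter]
  tauto

lemma kinv_kinv {n : ℕ} {A : Finset ℕ} (hA : A ⊆ Finset.Icc 1 n) :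
    KInv n (KInv n A) = A := by
  ext i
  simp only [KInv, Finset.mem_filter, Finset.mem_Icc]
  constructor
  · rintro ⟨⟨h1, h2⟩, h3⟩
    by_contra hiA
    exact h3 ⟨by omega, by
      have : n + 1 - (n + 1 - i) = i := by omega
      rw [this]; exact hiA⟩
  · intro hiA
    have hi := Finset.mem_Icc.mp (hA hiA)
    refine ⟨hi, fun hmem => ?_⟩
    have : n + 1 - (n + 1 - i) = i := by omega
    rw [this] at hmem
    exact hmem.2 hiA

lemma chordSep_kinv {n : ℕ} {A B : Finset ℕ} (h : ChordSep A B) :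
    ChordSep (KInv n A) (KInv n B) := by
  rintro ⟨i, j, k, l, hij, hjk, hkl, hor⟩
  apply h
  refine ⟨n + 1 - l, n + 1 - k, n + 1 - j, n + 1 - i, ?_⟩
  rcases hor with ⟨hi, hk, hj, hl⟩ | ⟨hi, hk, hj, hl⟩
  · rw [mem_kinv_sdiff] at hi hk hj hl
    have b1 := Finset.mem_Icc.mp hi.1
    have b2 := Finset.mem_Icc.mp hj.1
    have b3 := Finset.mem_Icc.mp hk.1
    have b4 := Finset.mem_Icc.mp hl.1
    refine ⟨by omega, by omega, by omega, Or.inl ⟨?_, ?_, ?_, ?_⟩⟩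
    · exact hl.2
    · exact hj.2
    · exact hk.2
    · exact hi.2
  · rw [mem_kinv_sdiff] at hi hk hj hl
    have b1 := Finset.mem_Icc.mp hi.1
    have b2 := Finset.mem_Icc.mp hj.1
    have b3 := Finset.mem_Icc.mp hk.1
    have b4 := Finset.mem_Icc.mp hl.1
    refine ⟨by omega, by omega, by omega, Or.inr ⟨?_, ?_, ?_, ?_⟩⟩
    · exact hl.2
    · exact hj.2
    · exact hk.2
    · exact hi.2

/-- If `C` is an inclusion-wise maximal symmetric chord separated collection
and `A ⊆ [n]` is chord separated from every member of `C` and from `A*`,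
then `A ∈ C` and `A* ∈ C`. -/
theorem mem_of_chordSep_maximal
    (n : ℕ) (hn : 0 < n)
    (C : Finset (Finset ℕ)) (hC : SymmCColl n C)
    (hmax : ∀ T : Finset (Finset ℕ), SymmCColl n T → C ⊆ T → T = C)
    (A : Finset ℕ) (hA : A ⊆ Finset.Icc 1 n)
    (hsep : ∀ B ∈ C, ChordSep A B) (hself : ChordSep A (KInv n A)) :
    A ∈ C ∧ KInv n A ∈ C := by
  set T : Finset (Finset ℕ) := insert A (insert (KInv n A) C) with hT
  have hsub : C ⊆ T := fun B hB => by simp [hT, hB]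
  have hsepA' : ∀ B ∈ C, ChordSep (KInv n A) B := by
    intro B hB
    have h1 : KInv n B ∈ C := hC.2.1 B hB
    have h2 : ChordSep A (KInv n B) := hsep _ h1
    have h3 := chordSep_kinv (n := n) h2
    rwa [kinv_kinv (hC.1 B hB)] at h3
  have hTcoll : SymmCColl n T := by
    refine ⟨?_, ?_, ?_⟩
    · intro B hB
      simp only [hT, Finset.mem_insert] at hB
      rcases hB with rfl | rfl | hB
      · exact hA
      · exact kinv_subset n A
      · exact hC.1 B hB
    · intro B hB
      simp only [hT, Finset.mem_insert] at hB ⊢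
      rcases hB with rfl | rfl | hB
      · exact Or.inr (Or.inl rfl)
      · exact Or.inl (kinv_kinv hA)
      · exact Or.inr (Or.inr (hC.2.1 B hB))
    · intro X hX Y hY
      simp only [hT, Finset.mem_insert] at hX hY
      rcases hX with rfl | rfl | hX <;> rcases hY with rfl | rfl | hY
      · exact chordSep_refl _
      · exact hself
      · exact hsep _ hY
      · exact chordSep_symm hself
      · exact chordSep_refl _
      · exact hsepA' _ hY
      · exact chordSep_symm (hsep _ hX)
      · exact chordSep_symm (hsepA' _ hX)
      · exact hC.2.2 X hX Y hY
  have hTC : T = C := hmax T hTcoll hsub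
  constructor
  · rw [← hTC]; simp [hT]
  · rw [← hTC]; simp [hT]
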